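/- Let q satisfy the fluid ODE q'_t = λ - θ·(q_t - 1)⁺ - μ·(q_t ⊓ 1) with λ < μ and q_0 < 1 (or λ = μ and q_0 < 1). Then there exists t₀ ≥ 0 such that q_t < 1 for all t ≥ t₀. -/

import Mathlib

private lemma stay_below (lam μ θ : ℝ) (hμ : 0 < μ) (hle : lam ≤ μ) (q : ℝ → ℝ)
    (hq : ∀ t : ℝ, 0 ≤ t →
      HasDerivAt q (lam - θ * max (q t - 1) 0 - μ * min (q t) 1) t)
    (t₁ : ℝ) (ht₁ : 0 ≤ t₁) (h1 : q t₁ < 1) :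
    ∀ t : ℝ, t₁ ≤ t → q t < 1 := by
  by_contra hcon
  push_neg at hcon
  obtain ⟨T₀, hT₀le, hT₀ge⟩ := hcon
  set S : Set ℝ := {t | t₁ ≤ t ∧ 1 ≤ q t} with hS
  have hne : S.Nonempty := ⟨T₀, hT₀le, hT₀ge⟩
  have hbdd : BddBelow S := ⟨t₁, fun x hx => hx.1⟩
  set T := sInf S with hT
  have ht₁T : t₁ ≤ T := le_csInf hne (fun x hx => hx.1)
  have hlt : ∀ t, t₁ ≤ t → t < T → q t < 1 := by
    intro t ht htT
    by_contra h
    push_neg at h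
    exact absurd (csInf_le hbdd ⟨ht, h⟩) (not_le.mpr htT)
  have hqT : 1 ≤ q T := by
    by_contra h
    push_neg at h
    have hcont : ContinuousAt q T := (hq T (le_trans ht₁ ht₁T)).continuousAt
    have hev : ∀ᶠ s in nhds T, q s < 1 := hcont.eventually_lt continuousAt_const h
    obtain ⟨ε, hε, hball⟩ := Metric.eventually_nhds_iff.mp hev
    obtain ⟨s, hsS, hs⟩ := (csInf_lt_iff hbdd hne).mp (lt_add_of_pos_right T hε)
    have hsT : T ≤ s := csInf_le hbdd hsS
    have : q s < 1 := hball (by rw [Real.dist_eq, abs_lt]; constructor <;> linarith)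
    exact absurd hsS.2 (not_le.mpr this)
  have ht₁T' : t₁ < T := by
    rcases lt_or_eq_of_le ht₁T with h | h
    · exact h
    · exfalso; rw [← h] at hqT; linarith
  set g : ℝ → ℝ := fun t => (1 - q t) * Real.exp (μ * t) with hg
  have hdg : ∀ t, t₁ < t → t < T → HasDerivAt g ((μ - lam) * Real.exp (μ * t)) t := by
    intro t ht1 ht2
    have h1 : q t < 1 := hlt t ht1.le ht2
    have hderivq : HasDerivAt q (lam - μ * q t) t := by
      have := hq t (le_trans ht₁ ht1.le)
      rw [max_eq_right (by linarith), min_eq_left (by linarith)] at this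
      simpa using this
    have he : HasDerivAt (fun s => Real.exp (μ * s)) (Real.exp (μ * t) * (μ * 1)) t :=
      HasDerivAt.exp ((hasDerivAt_id t).const_mul μ)
    have := ((hasDerivAt_const t (1:ℝ)).sub hderivq).mul he
    convert this using 1
    all_goals first | rfl | (simp only [Pi.sub_apply]; ring)
  have hgmono : MonotoneOn g (Set.Icc t₁ T) := by
    apply monotoneOn_of_deriv_nonneg (convex_Icc t₁ T)
    · apply ContinuousOn.mul
      · exact continuousOn_const.sub (fun t ht =>
          (hq t (le_trans ht₁ ht.1)).continuousAt.continuousWithinAt)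
      · exact (Real.continuous_exp.comp (continuous_const.mul continuous_id)).continuousOn
    · intro t ht
      rw [interior_Icc] at ht
      exact (hdg t ht.1 ht.2).differentiableAt.differentiableWithinAt
    · intro t ht
      rw [interior_Icc] at ht
      rw [(hdg t ht.1 ht.2).deriv]
      exact mul_nonneg (by linarith) (Real.exp_pos _).le
  have hle' : g t₁ ≤ g T :=
    hgmono (Set.left_mem_Icc.mpr ht₁T) (Set.right_mem_Icc.mpr ht₁T) ht₁T
  have hg1 : 0 < g t₁ := mul_pos (by linarith) (Real.exp_pos _)
  have hgT : g T ≤ 0 := mul_nonpos_of_nonpos_of_nonneg (by linarith) (Real.exp_pos _).le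
  linarith

theorem stmt_6 (lam μ θ : ℝ) (hlam : 0 < lam) (hμ : 0 < μ) (hθ : 0 < θ)
    (hle : lam ≤ μ) (q : ℝ → ℝ) (hq0 : 0 ≤ q 0) (hcrit : lam = μ → q 0 < 1)
    (hq : ∀ t : ℝ, 0 ≤ t →
      HasDerivAt q (lam - θ * max (q t - 1) 0 - μ * min (q t) 1) t) :
    ∃ t₀ : ℝ, 0 ≤ t₀ ∧ ∀ t : ℝ, t₀ ≤ t → q t < 1 := by
  -- it suffices to find some t₁ ≥ 0 with q t₁ < 1
  suffices h : ∃ t₁ : ℝ, 0 ≤ t₁ ∧ q t₁ < 1 by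
    obtain ⟨t₁, ht₁, h1⟩ := h
    exact ⟨t₁, ht₁, stay_below lam μ θ hμ hle q hq t₁ ht₁ h1⟩
  by_cases h0 : q 0 < 1
  · exact ⟨0, le_refl 0, h0⟩
  push_neg at h0
  have hlt : lam < μ := by
    rcases lt_or_eq_of_le hle with h | h
    · exact h
    · exact absurd (hcrit h) (not_lt.mpr h0)
  by_contra hcon
  push_neg at hcon
  -- then q t ≥ 1 for all t ≥ 0, so the derivative is ≤ lam - μ < 0
  have hge : ∀ t : ℝ, 0 ≤ t → 1 ≤ q t := hcon
  set h : ℝ → ℝ := fun t => q t - (lam - μ) * t with hh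
  have hdh : ∀ t, 0 < t → HasDerivAt h (-(θ * (q t - 1))) t := by
    intro t ht
    have h1 : 1 ≤ q t := hge t ht.le
    have hderivq : HasDerivAt q (lam - θ * (q t - 1) - μ) t := by
      have := hq t ht.le
      rw [max_eq_left (by linarith), min_eq_right (by linarith)] at this
      simpa using this
    have := hderivq.sub ((hasDerivAt_id t).const_mul (lam - μ))
    convert this using 1
    all_goals first | rfl | ring
  have hanti : AntitoneOn h (Set.Ici 0) := by
    apply antitoneOn_of_deriv_nonpos (convex_Ici 0)
    · exact ContinuousOn.sub (fun t ht => (hq t ht).continuousAt.continuousWithinAt)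
        ((continuous_const.mul continuous_id).continuousOn)
    · intro t ht
      rw [interior_Ici] at ht
      exact (hdh t ht).differentiableAt.differentiableWithinAt
    · intro t ht
      rw [interior_Ici] at ht
      rw [(hdh t ht).deriv]
      have := hge t ht.le
      nlinarith
  set T : ℝ := (q 0 - 1) / (μ - lam) + 1 with hT
  have hT0 : 0 < T := by
    rw [hT]
    have : (0:ℝ) ≤ (q 0 - 1) / (μ - lam) := div_nonneg (by linarith) (by linarith)
    linarith
  have hhT : h T ≤ h 0 := hanti (Set.self_mem_Ici) (Set.mem_Ici.mpr hT0.le) hT0.le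
  have hq0T : q T ≤ q 0 + (lam - μ) * T := by
    have hhT' : q T - (lam - μ) * T ≤ q 0 - (lam - μ) * 0 := hhT
    linarith
  have hTval : (μ - lam) * T = (q 0 - 1) + (μ - lam) := by
    have hne : μ - lam ≠ 0 := ne_of_gt (by linarith)
    rw [hT, mul_add, mul_one, mul_div_cancel₀ _ hne]
  have : q T < 1 := by nlinarith
  exact absurd (hge T hT0.le) (not_le.mpr this)
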